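/- Let Γ be a good pointclass. Then every set X ⊆ [ℕ]^ω belonging to Γ has the Ramsey property if and only if every set X ⊆ [ℕ]^ω belonging to Γ is completely Ramsey. -/

import Mathlib

open Set

open Classical in
/-- The characteristic function of a set, viewed as a point of the Cantor space `α → Bool`. -/
noncomputable def chi {α : Type} (s : Set α) : α → Bool :=
  fun a => if a ∈ s then true else false
/-- A *good pointclass*: a collection of subsets of Polish spaces containing all clopen
sets and closed under countable intersections, countable unions, finite products,
continuous images, and continuous preimages. -/
structure GoodPointclass : Type 1 where
  mem : ∀ (X : Type) [TopologicalSpace X], Set (Set X)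
  clopen_mem : ∀ (X : Type) [TopologicalSpace X] [PolishSpace X] (s : Set X),
    IsClopen s → s ∈ mem X
  iInter_mem : ∀ (X : Type) [TopologicalSpace X] [PolishSpace X] (s : ℕ → Set X),
    (∀ n, s n ∈ mem X) → (⋂ n, s n) ∈ mem X
  iUnion_mem : ∀ (X : Type) [TopologicalSpace X] [PolishSpace X] (s : ℕ → Set X),
    (∀ n, s n ∈ mem X) → (⋃ n, s n) ∈ mem X
  prod_mem : ∀ (X Y : Type) [TopologicalSpace X] [PolishSpace X]
    [TopologicalSpace Y] [PolishSpace Y] (s : Set X) (t : Set Y),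
    s ∈ mem X → t ∈ mem Y → s ×ˢ t ∈ mem (X × Y)
  image_mem : ∀ (X Y : Type) [TopologicalSpace X] [PolishSpace X]
    [TopologicalSpace Y] [PolishSpace Y] (f : X → Y) (s : Set X),
    Continuous f → s ∈ mem X → f '' s ∈ mem Y
  preimage_mem : ∀ (X Y : Type) [TopologicalSpace X] [PolishSpace X]
    [TopologicalSpace Y] [PolishSpace Y] (f : X → Y) (t : Set Y),
    Continuous f → t ∈ mem Y → f ⁻¹' t ∈ mem X
/-- A set `X ⊆ [ℕ]^ω` has the Ramsey property: there is an infinite `H ⊆ ℕ` with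
`[H]^ω ⊆ X` or `[H]^ω ∩ X = ∅`. -/
def RamseyProp (X : Set (Set ℕ)) : Prop :=
  ∃ H : Set ℕ, H.Infinite ∧
    ((∀ y : Set ℕ, y.Infinite → y ⊆ H → y ∈ X) ∨
     (∀ y : Set ℕ, y.Infinite → y ⊆ H → y ∉ X))

/-- A set `X ⊆ [ℕ]^ω` is completely Ramsey: for every finite `a ⊆ ℕ` and infinite
`A ⊆ ℕ` with `max a < min A` there is an infinite `H ⊆ A` such that
`[a,H] ⊆ X` or `[a,H] ∩ X = ∅`, where `[a,H] = {B ∈ [ℕ]^ω : a ⊆ B ⊆ a ∪ H}`. -/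
def CompletelyRamsey (X : Set (Set ℕ)) : Prop :=
  ∀ (a : Finset ℕ) (A : Set ℕ), A.Infinite → (∀ i ∈ a, ∀ j ∈ A, i < j) →
    ∃ H : Set ℕ, H.Infinite ∧ H ⊆ A ∧
      ((∀ B : Set ℕ, B.Infinite → ↑a ⊆ B → B ⊆ ↑a ∪ H → B ∈ X) ∨
       (∀ B : Set ℕ, B.Infinite → ↑a ⊆ B → B ⊆ ↑a ∪ H → B ∉ X))


instance polishSpace_nat_bool : PolishSpace (ℕ → Bool) := by
  have : TopologicalSpace.IsCompletelyMetrizableSpace (ℕ → Bool) := inferInstance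
  infer_instance

lemma chi_injective {α : Type} : Function.Injective (chi (α := α)) := by
  intro s t h
  ext x
  have hx := congrFun h x
  by_cases hs : x ∈ s <;> by_cases ht : x ∈ t <;> simp [chi, hs, ht] at hx ⊢

lemma chi_setOf_true {α : Type} (B : Set α) : {n | chi B n = true} = B := by
  ext n; simp [chi]

lemma chi_of_setOf_true {α : Type} (x : α → Bool) : chi {n | x n = true} = x := by
  funext n
  by_cases h : x n = true <;> simp [chi, h]

open Classical in
noncomputable def Fmap (a : Finset ℕ) (A : Set ℕ) : (ℕ → Bool) → (ℕ → Bool) :=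
  fun x m => if m ∈ a then true else if m ∈ A then x (Nat.count (· ∈ A) m) else false

lemma Fmap_continuous (a : Finset ℕ) (A : Set ℕ) : Continuous (Fmap a A) := by
  classical
  apply continuous_pi
  intro m
  by_cases hma : m ∈ a
  · simpa [Fmap, hma] using continuous_const
  by_cases hmA : m ∈ A
  · simpa [Fmap, hma, hmA] using continuous_apply (Nat.count (· ∈ A) m)
  · simpa [Fmap, hma, hmA] using continuous_const

open Classical in
lemma chi_phi (a : Finset ℕ) (A : Set ℕ) (hA : A.Infinite) (B : Set ℕ) :
    chi (↑a ∪ Nat.nth (· ∈ A) '' B) = Fmap a A (chi B) := by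
  have hA' : {n | (· ∈ A) n}.Infinite := hA
  funext m
  by_cases hma : m ∈ a
  · simp [chi, Fmap, hma]
  by_cases hmA : m ∈ A
  · have key : m ∈ Nat.nth (· ∈ A) '' B ↔ Nat.count (· ∈ A) m ∈ B := by
      constructor
      · rintro ⟨k, hk, rfl⟩
        have h2 : Nat.nth (· ∈ A) (Nat.count (· ∈ A) (Nat.nth (· ∈ A) k)) = Nat.nth (· ∈ A) k :=
          Nat.nth_count (Nat.nth_mem_of_infinite hA' k)
        rwa [Nat.nth_injective hA' h2]
      · intro hk; exact ⟨_, hk, Nat.nth_count hmA⟩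
    simp [chi, Fmap, hma, hmA, key]
  · have him : m ∉ Nat.nth (· ∈ A) '' B := by
      rintro ⟨k, _, rfl⟩; exact hmA (Nat.nth_mem_of_infinite hA' k)
    simp [chi, Fmap, hma, hmA, him]

lemma GoodPointclass.inter_mem' (Γ : GoodPointclass) {X : Type} [TopologicalSpace X]
    [PolishSpace X] {s t : Set X} (hs : s ∈ Γ.mem X) (ht : t ∈ Γ.mem X) :
    s ∩ t ∈ Γ.mem X := by
  have h : s ∩ t = ⋂ n : ℕ, (if n = 0 then s else t) := by
    apply subset_antisymm
    · intro x hx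
      simp only [Set.mem_iInter]
      intro n
      split
      · exact hx.1
      · exact hx.2
    · intro x hx
      simp only [Set.mem_iInter] at hx
      exact ⟨by simpa using hx 0, by simpa using hx 1⟩
  rw [h]
  exact Γ.iInter_mem X _ (fun n => by
    cases n with
    | zero => simpa using hs
    | succ k => simpa using ht)

lemma infinite_iff_forall_exists_gt' (S : Set ℕ) : S.Infinite ↔ ∀ n, ∃ m ∈ S, n < m := by
  constructor
  · exact fun h n => h.exists_gt n
  · intro h
    by_contra hfin
    rw [Set.not_infinite] at hfin
    obtain ⟨b, hb⟩ := hfin.bddAbove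
    obtain ⟨m, hm, hlt⟩ := h b
    exact absurd (hb hm) (by omega)

lemma infSet_mem (Γ : GoodPointclass) :
    {x : ℕ → Bool | {n | x n = true}.Infinite} ∈ Γ.mem (ℕ → Bool) := by
  have h : {x : ℕ → Bool | {n | x n = true}.Infinite} =
      ⋂ n, ⋃ m, {x : ℕ → Bool | x (n + m + 1) = true} := by
    ext x
    simp only [Set.mem_setOf_eq, Set.mem_iInter, Set.mem_iUnion]
    rw [infinite_iff_forall_exists_gt']
    constructor
    · intro h n
      obtain ⟨m, hm, hlt⟩ := h n
      refine ⟨m - n - 1, ?_⟩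
      have : n + (m - n - 1) + 1 = m := by omega
      rw [this]; exact hm
    · intro h n
      obtain ⟨m, hm⟩ := h n
      exact ⟨n + m + 1, hm, by omega⟩
  rw [h]
  refine Γ.iInter_mem _ _ (fun n => Γ.iUnion_mem _ _ (fun m => ?_))
  exact Γ.clopen_mem _ _
    ((isClopen_discrete ({true} : Set Bool)).preimage (continuous_apply (n + m + 1)))

theorem ramsey_iff_completelyRamsey_for_good_pointclass (Γ : GoodPointclass) :
    (∀ X : Set (Set ℕ), (∀ x ∈ X, x.Infinite) →
        chi '' X ∈ Γ.mem (ℕ → Bool) → RamseyProp X) ↔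
    (∀ X : Set (Set ℕ), (∀ x ∈ X, x.Infinite) →
        chi '' X ∈ Γ.mem (ℕ → Bool) → CompletelyRamsey X) := by
  constructor
  · intro hR X hXinf hXΓ a A hAinf hlt
    classical
    set e : ℕ → ℕ := Nat.nth (· ∈ A) with he
    have hA' : {n | (· ∈ A) n}.Infinite := hAinf
    have hemem : ∀ k, e k ∈ A := fun k => Nat.nth_mem_of_infinite hA' k
    have heinj : Function.Injective e := Nat.nth_injective hA'
    set Y : Set (Set ℕ) := {B | B.Infinite ∧ (↑a ∪ e '' B) ∈ X} with hY
    have hYchi : chi '' Y =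
        {x : ℕ → Bool | {n | x n = true}.Infinite} ∩ Fmap a A ⁻¹' (chi '' X) := by
      ext x
      constructor
      · rintro ⟨B, ⟨hBinf, hBX⟩, rfl⟩
        refine ⟨by rw [Set.mem_setOf_eq, chi_setOf_true]; exact hBinf, ?_⟩
        rw [Set.mem_preimage, ← chi_phi a A hAinf B]
        exact ⟨_, hBX, rfl⟩
      · rintro ⟨hxinf, hxF⟩
        set B : Set ℕ := {n | x n = true} with hBdef
        have hxB : chi B = x := chi_of_setOf_true x
        refine ⟨B, ⟨hxinf, ?_⟩, hxB⟩
        rw [Set.mem_preimage, ← hxB, ← chi_phi a A hAinf B] at hxF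
        obtain ⟨C, hC, hCeq⟩ := hxF
        have hCE := chi_injective hCeq
        rw [hCE] at hC
        exact hC
    have hYΓ : chi '' Y ∈ Γ.mem (ℕ → Bool) := by
      rw [hYchi]
      exact Γ.inter_mem' (infSet_mem Γ)
        (Γ.preimage_mem _ _ _ _ (Fmap_continuous a A) hXΓ)
    obtain ⟨H, hHinf, hcase⟩ := hR Y (fun B hB => hB.1) hYΓ
    refine ⟨e '' H, hHinf.image heinj.injOn, ?_, ?_⟩
    · rintro _ ⟨k, _, rfl⟩; exact hemem k
    · have key : ∀ B : Set ℕ, B.Infinite → ↑a ⊆ B → B ⊆ ↑a ∪ e '' H →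
          ∃ D : Set ℕ, D.Infinite ∧ D ⊆ H ∧ ↑a ∪ e '' D = B := by
        intro B hBinf haB hBsub
        set D : Set ℕ := e ⁻¹' (B \ ↑a) with hD
        have hBdiff : B \ ↑a ⊆ e '' H := by
          intro m hm
          rcases hBsub hm.1 with h | h
          · exact absurd h hm.2
          · exact h
        have hDe : e '' D = B \ ↑a := by
          apply subset_antisymm
          · rintro _ ⟨k, hk, rfl⟩; exact hk
          · intro m hm
            obtain ⟨k, _, rfl⟩ := hBdiff hm
            exact ⟨k, hm, rfl⟩
        have hDH : D ⊆ H := by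
          intro k hk
          obtain ⟨k', hk', hkk⟩ := hBdiff hk
          rwa [← heinj hkk]
        have hDinf : D.Infinite := by
          apply Set.Infinite.of_image e
          rw [hDe]
          exact hBinf.diff a.finite_toSet
        exact ⟨D, hDinf, hDH, by rw [hDe, Set.union_diff_cancel haB]⟩
      rcases hcase with h | h
      · left
        intro B hBinf haB hBsub
        obtain ⟨D, hDinf, hDH, hDB⟩ := key B hBinf haB hBsub
        have := h D hDinf hDH
        rw [hY, Set.mem_setOf_eq] at this
        have h2 := this.2
        rwa [hDB] at h2
      · right
        intro B hBinf haB hBsub hBX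
        obtain ⟨D, hDinf, hDH, hDB⟩ := key B hBinf haB hBsub
        exact h D hDinf hDH ⟨hDinf, by rw [hDB]; exact hBX⟩
  · intro hCR X hXinf hXΓ
    obtain ⟨H, hHinf, -, hcase⟩ :=
      hCR X hXinf hXΓ ∅ Set.univ Set.infinite_univ (by simp)
    refine ⟨H, hHinf, ?_⟩
    rcases hcase with h | h
    · left
      intro y hy hsub
      exact h y hy (by simp) (by simpa using hsub)
    · right
      intro y hy hsub
      exact h y hy (by simp) (by simpa using hsub)
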